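/- arXiv:2505.15761 — 3 statements merged into one kernel-verified Lean document; each statement's English description precedes it below -/
import Mathlib

section
/- Mal'cev's theorem (as used in the proof of Theorem 1): every finitely generated subgroup of the general linear group GL(n, ℚ) of invertible n × n matrices over the rational numbers is residually finite. -/
open Function

/-- mapMatrix of an injective ring hom is injective. -/
lemma aux_mapMatrix_inj {n : ℕ} {R S : Type} [CommRing R] [CommRing S]
    (f : R →+* S) (hf : Injective f) :
    Injective (f.mapMatrix : Matrix (Fin n) (Fin n) R →+* Matrix (Fin n) (Fin n) S) := by
  intro X Y hXY
  simp only [RingHom.mapMatrix_apply] at hXY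
  ext i j
  exact hf (by simpa [Matrix.map_apply] using congrFun (congrFun hXY i) j)

lemma aux_GLmap_inj {n : ℕ} {R S : Type} [CommRing R] [CommRing S]
    (f : R →+* S) (hf : Injective f) :
    Injective (Matrix.GeneralLinearGroup.map (n := Fin n) f) := by
  intro u v huv
  apply Units.ext
  apply aux_mapMatrix_inj f hf
  exact congrArg Units.val huv

lemma aux_mem_range {n : ℕ} {R : Type} [CommRing R]
    (f : R →+* ℚ) (hf : Injective f) (M : GL (Fin n) ℚ)
    (hA : ∀ i j, (M : Matrix (Fin n) (Fin n) ℚ) i j ∈ f.range)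
    (hB : ∀ i j, ((M⁻¹ : GL (Fin n) ℚ) : Matrix (Fin n) (Fin n) ℚ) i j ∈ f.range) :
    M ∈ (Matrix.GeneralLinearGroup.map (n := Fin n) f).range := by
  choose A hA using fun i j => RingHom.mem_range.mp (hA i j)
  choose B hB using fun i j => RingHom.mem_range.mp (hB i j)
  set A' : Matrix (Fin n) (Fin n) R := fun i j => A i j with hA'
  set B' : Matrix (Fin n) (Fin n) R := fun i j => B i j with hB'
  have hfA : f.mapMatrix A' = (M : Matrix (Fin n) (Fin n) ℚ) := by
    ext i j; simpa [RingHom.mapMatrix_apply, Matrix.map_apply] using hA i j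
  have hfB : f.mapMatrix B' = ((M⁻¹ : GL (Fin n) ℚ) : Matrix (Fin n) (Fin n) ℚ) := by
    ext i j; simpa [RingHom.mapMatrix_apply, Matrix.map_apply] using hB i j
  have hAB : A' * B' = 1 := by
    apply aux_mapMatrix_inj f hf
    rw [map_mul, map_one, hfA, hfB]
    exact M.mul_inv
  have hBA : B' * A' = 1 := by
    apply aux_mapMatrix_inj f hf
    rw [map_mul, map_one, hfA, hfB]
    exact M.inv_mul
  refine ⟨⟨A', B', hAB, hBA⟩, ?_⟩
  apply Units.ext
  exact hfA

/-- Mal'cev's theorem: every finitely generated subgroup of `GL(n, ℚ)` is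
residually finite, i.e. for every element `h ≠ 1` of the subgroup there is a
homomorphism to a finite group not killing `h`. -/
theorem malcev_fg_subgroup_GL_rat_residually_finite
    (n : ℕ) (H : Subgroup (GL (Fin n) ℚ)) (hFG : H.FG) :
    ∀ h : H, h ≠ 1 →
      ∃ (Q : Type) (_ : Group Q) (_ : Finite Q) (φ : H →* Q), φ h ≠ 1 := by
  classical
  obtain ⟨S, hS⟩ := hFG
  -- the finite set of all matrix entries of generators and their inverses
  set T : Finset ℚ := S.biUnion (fun s =>
      (Finset.univ.image fun p : Fin n × Fin n =>
        (s : Matrix (Fin n) (Fin n) ℚ) p.1 p.2) ∪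
      (Finset.univ.image fun p : Fin n × Fin n =>
        ((s⁻¹ : GL (Fin n) ℚ) : Matrix (Fin n) (Fin n) ℚ) p.1 p.2)) with hT
  -- common denominator
  set D : ℕ := T.prod (fun q => q.den) with hD
  have hDpos : 0 < D := Finset.prod_pos (fun q _ => q.pos)
  have hDQ : ((D : ℤ) : ℚ) ≠ 0 := by
    push_cast
    exact_mod_cast hDpos.ne'
  -- the localization ℤ[1/D] and its embedding into ℚ
  set R₀ := Localization.Away (D : ℤ) with hR₀
  have hful : IsUnit ((Int.castRingHom ℚ) (D : ℤ)) := isUnit_iff_ne_zero.mpr hDQ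
  set f : R₀ →+* ℚ := Localization.awayLift (Int.castRingHom ℚ) (D : ℤ) hful with hf
  have hfalg : ∀ z : ℤ, f (algebraMap ℤ R₀ z) = (z : ℚ) := fun z =>
    IsLocalization.Away.lift_eq (D : ℤ) hful z
  have hfinj : Injective f := by
    rw [injective_iff_map_eq_zero]
    intro x hx
    obtain ⟨⟨a, m⟩, hm⟩ := IsLocalization.surj (Submonoid.powers (D : ℤ)) x
    have h1 : f (x * algebraMap ℤ R₀ (m : ℤ)) = f (algebraMap ℤ R₀ a) := by rw [hm]
    rw [map_mul, hx, zero_mul, hfalg] at h1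
    have ha : a = 0 := by exact_mod_cast h1.symm
    rw [ha, map_zero] at hm
    have hu := IsLocalization.map_units R₀ m
    exact (hu.mul_left_eq_zero).mp hm
  -- the induced injection of general linear groups
  set Φ : GL (Fin n) R₀ →* GL (Fin n) ℚ := Matrix.GeneralLinearGroup.map f with hΦ
  have hΦinj : Injective Φ := aux_GLmap_inj f hfinj
  -- the range of f contains every rational whose denominator divides D
  have hinvD : ((D : ℚ))⁻¹ ∈ f.range := by
    refine ⟨IsLocalization.Away.invSelf (D : ℤ), ?_⟩
    have h1 : f (algebraMap ℤ R₀ (D : ℤ) * IsLocalization.Away.invSelf (D : ℤ)) = f 1 := by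
      rw [IsLocalization.Away.mul_invSelf]
    rw [map_mul, map_one, hfalg] at h1
    have : ((D : ℤ) : ℚ) = (D : ℚ) := by push_cast; ring
    rw [this] at h1
    exact (inv_eq_of_mul_eq_one_right h1).symm
  have hden : ∀ q : ℚ, q.den ∣ D → q ∈ f.range := by
    intro q hq
    obtain ⟨c, hc⟩ := hq
    have hz : ((q.num * c : ℤ) : ℚ) ∈ f.range := ⟨algebraMap ℤ R₀ (q.num * c), hfalg _⟩
    have key : q = ((q.num * c : ℤ) : ℚ) * ((D : ℚ))⁻¹ := by
      have hD0 : (D : ℚ) ≠ 0 := by exact_mod_cast hDpos.ne'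
      have hqD : q * (D : ℚ) = ((q.num * c : ℤ) : ℚ) := by
        rw [hc]
        push_cast
        rw [← mul_assoc, Rat.mul_den_eq_num]
      rw [show ((q.num * c : ℤ) : ℚ) * ((D : ℚ))⁻¹ = ((q.num * c : ℤ) : ℚ) / D from
        (div_eq_mul_inv _ _).symm, eq_div_iff hD0]
      exact hqD
    rw [key]
    exact mul_mem hz hinvD
  -- every generator is in the range of Φ
  have hHle : H ≤ Φ.range := by
    rw [← hS]
    rw [Subgroup.closure_le]
    intro s hs
    refine aux_mem_range f hfinj s (fun i j => hden _ ?_) (fun i j => hden _ ?_)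
    · refine Finset.dvd_prod_of_mem _ ?_
      rw [hT, Finset.mem_biUnion]
      exact ⟨s, hs, Finset.mem_union_left _ (Finset.mem_image.mpr ⟨(i, j), Finset.mem_univ _, rfl⟩)⟩
    · refine Finset.dvd_prod_of_mem _ ?_
      rw [hT, Finset.mem_biUnion]
      exact ⟨s, hs, Finset.mem_union_right _ (Finset.mem_image.mpr ⟨(i, j), Finset.mem_univ _, rfl⟩)⟩
  -- now treat a nontrivial element
  intro h hne
  obtain ⟨u, hu⟩ := hHle h.2
  have hune : u ≠ 1 := by
    intro e
    apply hne
    apply Subtype.ext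
    rw [← hu, e, map_one]
    simp
  -- find a nonzero entry of u - 1
  have hval : (u : Matrix (Fin n) (Fin n) R₀) ≠ 1 := fun e => hune (Units.ext e)
  obtain ⟨i, j, hij⟩ : ∃ i j, (u : Matrix (Fin n) (Fin n) R₀) i j ≠
      (1 : Matrix (Fin n) (Fin n) R₀) i j := by
    by_contra hcon
    push_neg at hcon
    exact hval (by ext i j; exact hcon i j)
  set x : R₀ := (u : Matrix (Fin n) (Fin n) R₀) i j - (1 : Matrix (Fin n) (Fin n) R₀) i j
    with hx
  have hx0 : x ≠ 0 := sub_ne_zero.mpr hij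
  obtain ⟨⟨a, m⟩, hm⟩ := IsLocalization.surj (Submonoid.powers (D : ℤ)) x
  have ha : a ≠ 0 := by
    intro h0
    rw [h0, map_zero] at hm
    exact hx0 (((IsLocalization.map_units R₀ m).mul_left_eq_zero).mp hm)
  -- choose a large prime power
  obtain ⟨p, hpD, hp⟩ := Nat.exists_infinite_primes (D + 1)
  have hpndvd : ¬ p ∣ D := fun hdvd => by
    have := Nat.le_of_dvd hDpos hdvd
    omega
  set e : ℕ := a.natAbs with he
  set m' : ℕ := p ^ e with hm'
  have hm'1 : 1 < m' := by
    have h2 : 2 ≤ p := hp.two_le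
    have he1 : 1 ≤ e := Nat.one_le_iff_ne_zero.mpr (Int.natAbs_ne_zero.mpr ha)
    calc 1 < 2 ^ 1 := by norm_num
    _ ≤ p ^ e := Nat.pow_le_pow_left h2 1 |>.trans (Nat.pow_le_pow_right (by omega) he1)
  haveI : NeZero m' := ⟨by omega⟩
  have hcop : D.Coprime m' := by
    rw [hm']
    exact Nat.Coprime.pow_right e ((Nat.coprime_comm).mp (hp.coprime_iff_not_dvd.mpr hpndvd))
  have hgu : IsUnit ((Int.castRingHom (ZMod m')) (D : ℤ)) := by
    have : ((Int.castRingHom (ZMod m')) (D : ℤ)) = ((D : ℕ) : ZMod m') := by simp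
    rw [this]
    exact (ZMod.isUnit_iff_coprime D m').mpr hcop
  set g : R₀ →+* ZMod m' := Localization.awayLift (Int.castRingHom (ZMod m')) (D : ℤ) hgu
    with hg
  have hgalg : ∀ z : ℤ, g (algebraMap ℤ R₀ z) = (z : ZMod m') := fun z =>
    IsLocalization.Away.lift_eq (D : ℤ) hgu z
  -- the finite quotient
  refine ⟨GL (Fin n) (ZMod m'), inferInstance, inferInstance,
    (Matrix.GeneralLinearGroup.map g).comp
      ((MonoidHom.ofInjective hΦinj).symm.toMonoidHom.comp (Subgroup.inclusion hHle)), ?_⟩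
  intro hone
  -- identify the lift of h with u
  have hρ : ((MonoidHom.ofInjective hΦinj).symm.toMonoidHom.comp
      (Subgroup.inclusion hHle)) h = u := by
    apply hΦinj
    rw [MonoidHom.comp_apply, MulEquiv.coe_toMonoidHom,
      MonoidHom.apply_ofInjective_symm hΦinj, Subgroup.coe_inclusion]
    exact hu.symm
  rw [MonoidHom.comp_apply, hρ] at hone
  -- extract the entry equation
  have hmat : (g.mapMatrix (u : Matrix (Fin n) (Fin n) R₀)) =
      (1 : Matrix (Fin n) (Fin n) (ZMod m')) := congrArg Units.val hone
  have hentry : g ((u : Matrix (Fin n) (Fin n) R₀) i j) =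
      g ((1 : Matrix (Fin n) (Fin n) R₀) i j) := by
    have h1 : (g.mapMatrix (u : Matrix (Fin n) (Fin n) R₀)) i j =
        (1 : Matrix (Fin n) (Fin n) (ZMod m')) i j := by rw [hmat]
    simp only [RingHom.mapMatrix_apply, Matrix.map_apply] at h1
    rw [h1]
    by_cases hij' : i = j <;> simp [Matrix.one_apply, hij', map_one, map_zero]
  have hgx : g x = 0 := by
    rw [hx, map_sub, hentry, sub_self]
  -- derive the contradiction
  have h2 : g (x * algebraMap ℤ R₀ (m : ℤ)) = g (algebraMap ℤ R₀ a) := by rw [hm]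
  rw [map_mul, hgx, zero_mul, hgalg] at h2
  have hdvd : ((m' : ℤ)) ∣ a := (ZMod.intCast_zmod_eq_zero_iff_dvd a m').mp h2.symm
  have hdvd' : m' ∣ a.natAbs := Int.natCast_dvd_natCast.mp (by
    rwa [Int.dvd_natAbs])
  have hle : m' ≤ a.natAbs := Nat.le_of_dvd (Int.natAbs_pos.mpr ha) hdvd'
  have hlt : a.natAbs < m' := by
    rw [hm', he]
    exact Nat.lt_pow_self hp.one_lt
  omega
end

section
/- If G is a finitely generated infinite simple group and ρ : G → GL(n, ℚ) is a group homomorphism into the group of invertible n × n rational matrices, then ρ is trivial, i.e. ρ(g) is the identity matrix for every g ∈ G. (This is the key intermediate step in the proof of Theorem 1 showing that the constructed groups act trivially on the rational homology of any space with finite Betti numbers.) -/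
/-- A homomorphism from a finitely generated infinite simple group into
`GL(n, ℚ)` is trivial. -/
theorem fg_infinite_simple_to_GL_rat_trivial
    (G : Type) [Group G] [Group.FG G] [Infinite G] [IsSimpleGroup G]
    (n : ℕ) (ρ : G →* GL (Fin n) ℚ) :
    ∀ g : G, ρ g = 1 := by
  classical
  rcases IsSimpleGroup.eq_bot_or_eq_top_of_normal ρ.ker (MonoidHom.normal_ker ρ) with hbot | htop
  swap
  · intro g
    have : g ∈ ρ.ker := htop ▸ Subgroup.mem_top g
    exact this
  exfalso
  have hinj : Function.Injective ρ := (MonoidHom.ker_eq_bot_iff ρ).mp hbot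
  obtain ⟨g, hg⟩ := exists_ne (1 : G)
  have hρg : ((ρ g : GL (Fin n) ℚ) : Matrix (Fin n) (Fin n) ℚ) ≠ 1 := by
    intro h
    exact hg (hinj (Units.ext (by simpa using h)))
  obtain ⟨i₀, j₀, hij⟩ : ∃ i j, ((ρ g : GL (Fin n) ℚ) : Matrix (Fin n) (Fin n) ℚ) i j
      ≠ (1 : Matrix (Fin n) (Fin n) ℚ) i j := by
    by_contra h
    push_neg at h
    exact hρg (by ext i j; exact h i j)
  set r : ℚ := ((ρ g : GL (Fin n) ℚ) : Matrix (Fin n) (Fin n) ℚ) i₀ j₀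
      - (1 : Matrix (Fin n) (Fin n) ℚ) i₀ j₀ with hrdef
  have hr0 : r ≠ 0 := sub_ne_zero.mpr hij
  -- a finite generating set
  obtain ⟨S, hScl, hSfin⟩ := Group.fg_iff.mp ‹Group.FG G›
  set T : Finset G := hSfin.toFinset with hTdef
  have hT : Subgroup.closure (T : Set G) = ⊤ := by
    rw [hTdef, Set.Finite.coe_toFinset]
    exact hScl
  -- a big product of all relevant denominators and numerators
  set N : ℕ := (∏ t ∈ T, ((∏ i, ∏ j, (((ρ t : GL (Fin n) ℚ) : Matrix (Fin n) (Fin n) ℚ) i j).den)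
      * (∏ i, ∏ j, ((((ρ t)⁻¹ : GL (Fin n) ℚ) : Matrix (Fin n) (Fin n) ℚ) i j).den)))
      * (r.den * r.num.natAbs) with hNdef
  have hN0 : N ≠ 0 := by
    have h1 : r.den ≠ 0 := r.den_nz
    have h2 : r.num.natAbs ≠ 0 := by simpa using Rat.num_ne_zero.mpr hr0
    refine Nat.mul_ne_zero (Finset.prod_ne_zero_iff.mpr ?_) (Nat.mul_ne_zero h1 h2)
    intro t _
    refine Nat.mul_ne_zero ?_ ?_ <;>
      exact Finset.prod_ne_zero_iff.mpr fun i _ =>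
        Finset.prod_ne_zero_iff.mpr fun j _ => (Rat.den_nz _)
  -- choose a prime larger than `N`
  obtain ⟨p, hpN, hp⟩ := Nat.exists_infinite_primes (N + 1)
  haveI : Fact p.Prime := ⟨hp⟩
  have hpndvd : ∀ d : ℕ, d ∣ N → ¬ p ∣ d := by
    intro d hd hpd
    have h1 : p ∣ N := hpd.trans hd
    have := Nat.le_of_dvd (Nat.pos_of_ne_zero hN0) h1
    omega
  -- `p` does not divide any denominator of an entry of a generator or its inverse
  have hTden : ∀ t ∈ T,
      (∀ i j, ¬ p ∣ (((ρ t : GL (Fin n) ℚ) : Matrix (Fin n) (Fin n) ℚ) i j).den)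
      ∧ (∀ i j, ¬ p ∣ ((((ρ t)⁻¹ : GL (Fin n) ℚ) : Matrix (Fin n) (Fin n) ℚ) i j).den) := by
    intro t ht
    constructor <;> intro i j <;> refine hpndvd _ ?_
    · have h1 : (((ρ t : GL (Fin n) ℚ) : Matrix (Fin n) (Fin n) ℚ) i j).den
          ∣ ∏ j', (((ρ t : GL (Fin n) ℚ) : Matrix (Fin n) (Fin n) ℚ) i j').den :=
        Finset.dvd_prod_of_mem _ (Finset.mem_univ j)
      have h2 : (∏ j', (((ρ t : GL (Fin n) ℚ) : Matrix (Fin n) (Fin n) ℚ) i j').den)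
          ∣ ∏ i', ∏ j', (((ρ t : GL (Fin n) ℚ) : Matrix (Fin n) (Fin n) ℚ) i' j').den :=
        Finset.dvd_prod_of_mem _ (Finset.mem_univ i)
      refine ((h1.trans h2).trans (dvd_mul_right _ _)).trans
        ((Finset.dvd_prod_of_mem _ ht).trans (dvd_mul_right _ _))
    · have h1 : ((((ρ t)⁻¹ : GL (Fin n) ℚ) : Matrix (Fin n) (Fin n) ℚ) i j).den
          ∣ ∏ j', ((((ρ t)⁻¹ : GL (Fin n) ℚ) : Matrix (Fin n) (Fin n) ℚ) i j').den :=
        Finset.dvd_prod_of_mem _ (Finset.mem_univ j)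
      have h2 : (∏ j', ((((ρ t)⁻¹ : GL (Fin n) ℚ) : Matrix (Fin n) (Fin n) ℚ) i j').den)
          ∣ ∏ i', ∏ j', ((((ρ t)⁻¹ : GL (Fin n) ℚ) : Matrix (Fin n) (Fin n) ℚ) i' j').den :=
        Finset.dvd_prod_of_mem _ (Finset.mem_univ i)
      refine ((h1.trans h2).trans (dvd_mul_left _ _)).trans
        ((Finset.dvd_prod_of_mem _ ht).trans (dvd_mul_right _ _))
  -- `p` does not divide the numerator or denominator of `r`
  have hrden : ¬ p ∣ r.den := hpndvd _ ((dvd_mul_right _ _).trans (dvd_mul_left _ _))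
  have hrnum : ¬ p ∣ r.num.natAbs := hpndvd _ ((dvd_mul_left _ _).trans (dvd_mul_left _ _))
  -- `r` has `p`-adic norm one
  have hnorm1 : ‖(r : ℚ_[p])‖ = 1 := by
    rw [Padic.eq_padicNorm]
    have hnum : padicValInt p r.num = 0 :=
      padicValInt.eq_zero_of_not_dvd (by rwa [Int.natCast_dvd])
    have hden : padicValNat p r.den = 0 := padicValNat.eq_zero_of_not_dvd hrden
    have hval : padicValRat p r = 0 := by
      unfold padicValRat
      rw [hnum, hden]
      simp
    rw [padicNorm, if_neg hr0, hval]
    norm_num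
  -- all entries of all `ρ x` are `p`-integral
  set K : Subgroup G :=
  { carrier := {x | (∀ i j,
        ‖((((ρ x : GL (Fin n) ℚ) : Matrix (Fin n) (Fin n) ℚ) i j : ℚ) : ℚ_[p])‖ ≤ 1)
      ∧ (∀ i j,
        ‖(((((ρ x)⁻¹ : GL (Fin n) ℚ) : Matrix (Fin n) (Fin n) ℚ) i j : ℚ) : ℚ_[p])‖ ≤ 1)}
    one_mem' := by
      constructor <;> intro i j <;>
        · simp only [map_one, inv_one, Units.val_one, Matrix.one_apply]
          split_ifs <;> simp
    mul_mem' := by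
      rintro a b ⟨ha1, ha2⟩ ⟨hb1, hb2⟩
      constructor
      · intro i j
        rw [map_mul ρ, Units.val_mul, Matrix.mul_apply, Rat.cast_sum]
        refine IsUltrametricDist.norm_sum_le_of_forall_le_of_nonneg zero_le_one fun k _ => ?_
        rw [Rat.cast_mul, norm_mul]
        exact mul_le_one₀ (ha1 i k) (norm_nonneg _) (hb1 k j)
      · intro i j
        rw [map_mul ρ, mul_inv_rev, Units.val_mul, Matrix.mul_apply, Rat.cast_sum]
        refine IsUltrametricDist.norm_sum_le_of_forall_le_of_nonneg zero_le_one fun k _ => ?_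
        rw [Rat.cast_mul, norm_mul]
        exact mul_le_one₀ (hb2 i k) (norm_nonneg _) (ha2 k j)
    inv_mem' := by
      rintro a ⟨ha1, ha2⟩
      refine ⟨?_, ?_⟩ <;> intro i j
      · rw [map_inv]
        exact ha2 i j
      · rw [map_inv, inv_inv]
        exact ha1 i j } with hKdef
  have hint : ∀ x : G, ∀ i j,
      ‖((((ρ x : GL (Fin n) ℚ) : Matrix (Fin n) (Fin n) ℚ) i j : ℚ) : ℚ_[p])‖ ≤ 1 := by
    intro x
    have hle : (⊤ : Subgroup G) ≤ K := by
      rw [← hT]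
      refine (Subgroup.closure_le K).mpr ?_
      intro t ht
      have ht' : t ∈ T := ht
      exact ⟨fun i j => Padic.norm_rat_le_one ((hTden t ht').1 i j),
             fun i j => Padic.norm_rat_le_one ((hTden t ht').2 i j)⟩
    exact (hle (Subgroup.mem_top x)).1
  -- the `p`-integral matrix attached to each group element
  set M : G → Matrix (Fin n) (Fin n) ℤ_[p] :=
    fun x => Matrix.of fun i j =>
      (⟨((((ρ x : GL (Fin n) ℚ) : Matrix (Fin n) (Fin n) ℚ) i j : ℚ) : ℚ_[p]), hint x i j⟩ : ℤ_[p])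
    with hMdef
  have Mmul : ∀ a b, M (a * b) = M a * M b := by
    intro a b
    ext i j
    apply Subtype.ext
    show ((((ρ (a * b) : GL (Fin n) ℚ) : Matrix (Fin n) (Fin n) ℚ) i j : ℚ) : ℚ_[p])
      = (((M a * M b) i j : ℤ_[p]) : ℚ_[p])
    rw [map_mul ρ, Units.val_mul, Matrix.mul_apply, Rat.cast_sum, Matrix.mul_apply]
    rw [show (((∑ k, M a i k * M b k j : ℤ_[p])) : ℚ_[p]) = ∑ k, ((M a i k * M b k j : ℤ_[p]) : ℚ_[p])
      from map_sum (PadicInt.Coe.ringHom (p := p)) _ _]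
    simp [hMdef]; rfl
  have M1 : M 1 = 1 := by
    ext i j
    apply Subtype.ext
    show ((((ρ 1 : GL (Fin n) ℚ) : Matrix (Fin n) (Fin n) ℚ) i j : ℚ) : ℚ_[p])
      = (((1 : Matrix (Fin n) (Fin n) ℤ_[p]) i j : ℤ_[p]) : ℚ_[p])
    simp only [map_one, Units.val_one, Matrix.one_apply]
    split_ifs <;> simp
  -- reduce modulo `p`
  set A : G → Matrix (Fin n) (Fin n) (ZMod p) :=
    fun x => (PadicInt.toZMod (p := p)).mapMatrix (M x) with hAdef
  have Amul : ∀ a b, A (a * b) = A a * A b := by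
    intro a b
    rw [hAdef]
    simp only [Mmul, map_mul]
  have A1 : A 1 = 1 := by rw [hAdef]; simp only [M1, map_one]
  set π : G →* GL (Fin n) (ZMod p) :=
  { toFun := fun x => (⟨A x, A x⁻¹,
      by rw [← Amul, mul_inv_cancel, A1], by rw [← Amul, inv_mul_cancel, A1]⟩
        : (Matrix (Fin n) (Fin n) (ZMod p))ˣ)
    map_one' := by
      apply Units.ext
      simpa using A1
    map_mul' := fun a b => by
      apply Units.ext
      simpa using Amul a b } with hπdef
  haveI hfin : Finite (GL (Fin n) (ZMod p)) :=
    Finite.of_injective (fun u : GL (Fin n) (ZMod p) => (u : Matrix (Fin n) (Fin n) (ZMod p)))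
      Units.val_injective
  rcases IsSimpleGroup.eq_bot_or_eq_top_of_normal π.ker (MonoidHom.normal_ker π) with h1 | h2
  · have hπinj : Function.Injective π := (MonoidHom.ker_eq_bot_iff π).mp h1
    haveI : Finite G := Finite.of_injective π hπinj
    exact not_finite G
  · have hg1 : π g = 1 := by
      have : g ∈ π.ker := h2 ▸ Subgroup.mem_top g
      exact this
    have hAg : A g = 1 := congrArg Units.val hg1
    have hentry : PadicInt.toZMod (M g i₀ j₀) = (1 : Matrix (Fin n) (Fin n) (ZMod p)) i₀ j₀ := by
      have := congrFun (congrFun (congrArg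
        (fun m : Matrix (Fin n) (Fin n) (ZMod p) => (m : Fin n → Fin n → ZMod p)) hAg) i₀) j₀
      simpa [hAdef, RingHom.mapMatrix_apply, Matrix.map_apply] using this
    have hker : PadicInt.toZMod (M g i₀ j₀ - (1 : Matrix (Fin n) (Fin n) ℤ_[p]) i₀ j₀) = 0 := by
      rw [map_sub, hentry]
      have : PadicInt.toZMod ((1 : Matrix (Fin n) (Fin n) ℤ_[p]) i₀ j₀)
          = (1 : Matrix (Fin n) (Fin n) (ZMod p)) i₀ j₀ := by
        simp [Matrix.one_apply, apply_ite (PadicInt.toZMod (p := p))]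
      rw [this, sub_self]
    have hmem : M g i₀ j₀ - (1 : Matrix (Fin n) (Fin n) ℤ_[p]) i₀ j₀
        ∈ IsLocalRing.maximalIdeal ℤ_[p] := by
      rw [← PadicInt.ker_toZMod, RingHom.mem_ker]
      exact hker
    have hlt : ‖M g i₀ j₀ - (1 : Matrix (Fin n) (Fin n) ℤ_[p]) i₀ j₀‖ < 1 := by
      rw [PadicInt.maximalIdeal_eq_span_p, Ideal.mem_span_singleton,
        ← PadicInt.norm_lt_one_iff_dvd] at hmem
      exact hmem
    have hvaleq : (((M g i₀ j₀ - (1 : Matrix (Fin n) (Fin n) ℤ_[p]) i₀ j₀) : ℤ_[p]) : ℚ_[p])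
        = ((r : ℚ) : ℚ_[p]) := by
      rw [hrdef]
      push_cast
      simp only [hMdef, Matrix.one_apply, Matrix.of_apply]
      split_ifs <;> simp <;> rfl
    rw [PadicInt.norm_def, hvaleq, hnorm1] at hlt
    exact lt_irrefl 1 hlt
end

section
/- If G is a finitely generated infinite simple group, V is a finite-dimensional vector space over ℚ, and ρ : G → GL(V) is a group homomorphism into the group of ℚ-linear automorphisms of V, then ρ is trivial, i.e. ρ(g) = id_V for every g ∈ G. -/
open scoped Matrix

section Aux

variable {p : ℕ} [Fact p.Prime]

/-- If `p` does not divide the denominator of `q`, then `q` is `p`-integral. -/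
lemma aux_norm_rat_le_one (q : ℚ) (h : ¬ (p : ℤ) ∣ (q.den : ℤ)) : ‖(q : ℚ_[p])‖ ≤ 1 := by
  have hden : ‖((q.den : ℤ) : ℚ_[p])‖ = 1 := by
    refine le_antisymm (Padic.norm_int_le_one _) ?_
    by_contra hlt
    push_neg at hlt
    exact h (Padic.norm_intCast_lt_one_iff.mp hlt)
  have : (q : ℚ_[p]) = (q.num : ℚ_[p]) / ((q.den : ℤ) : ℚ_[p]) := by
    rw [Rat.cast_def]; push_cast; ring
  rw [this, norm_div, hden, div_one]
  exact Padic.norm_int_le_one _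

lemma aux_norm_rat_eq_one (q : ℚ) (hd : ¬ (p : ℤ) ∣ (q.den : ℤ))
    (hn : ¬ (p : ℤ) ∣ q.num) : ‖(q : ℚ_[p])‖ = 1 := by
  have hden : ‖((q.den : ℤ) : ℚ_[p])‖ = 1 := by
    refine le_antisymm (Padic.norm_int_le_one _) ?_
    by_contra hlt; push_neg at hlt
    exact hd (Padic.norm_intCast_lt_one_iff.mp hlt)
  have hnum : ‖(q.num : ℚ_[p])‖ = 1 := by
    refine le_antisymm (Padic.norm_int_le_one _) ?_
    by_contra hlt; push_neg at hlt
    exact hn (Padic.norm_intCast_lt_one_iff.mp hlt)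
  have : (q : ℚ_[p]) = (q.num : ℚ_[p]) / ((q.den : ℤ) : ℚ_[p]) := by
    rw [Rat.cast_def]; push_cast; ring
  rw [this, norm_div, hden, hnum, div_one]

lemma aux_toZMod_eq_zero {x : ℤ_[p]} (h : PadicInt.toZMod x = 0) : ‖x‖ < 1 := by
  rw [PadicInt.norm_lt_one_iff_dvd]
  have hx : x ∈ RingHom.ker (PadicInt.toZMod (p := p)) := by simpa [RingHom.mem_ker]
  rw [PadicInt.ker_toZMod, PadicInt.maximalIdeal_eq_span_p, Ideal.mem_span_singleton] at hx
  exact hx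

end Aux

/-- A representation of a finitely generated infinite simple group on a
finite-dimensional rational vector space is trivial. -/
theorem fg_infinite_simple_rep_on_findim_rat_vector_space_trivial
    (G : Type) [Group G] [Group.FG G] [Infinite G] [IsSimpleGroup G]
    (V : Type) [AddCommGroup V] [Module ℚ V] [FiniteDimensional ℚ V]
    (ρ : G →* (V ≃ₗ[ℚ] V)) :
    ∀ g : G, ρ g = 1 := by
  classical
  by_contra hcon
  push_neg at hcon
  obtain ⟨g₀, hg₀⟩ := hcon
  set n := Module.finrank ℚ V with hn
  let b : Module.Basis (Fin n) ℚ V := Module.finBasis ℚ V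
  let m1 : (V ≃ₗ[ℚ] V) →* (V →ₗ[ℚ] V) := LinearEquiv.automorphismGroup.toLinearMapMonoidHom
  let m2 : (V →ₗ[ℚ] V) →* Matrix (Fin n) (Fin n) ℚ :=
    (LinearMap.toMatrixAlgEquiv b).toAlgHom.toRingHom.toMonoidHom
  let M : G →* Matrix (Fin n) (Fin n) ℚ := (m2.comp m1).comp ρ
  -- the matrix of `ρ g₀` is not the identity
  have hMg₀ : M g₀ ≠ 1 := by
    intro h
    apply hg₀
    have h1 : m2 (m1 (ρ g₀)) = m2 (m1 (1 : V ≃ₗ[ℚ] V)) := by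
      rw [map_one, map_one]; exact h
    have h2 : m1 (ρ g₀) = m1 (1 : V ≃ₗ[ℚ] V) :=
      (LinearMap.toMatrixAlgEquiv b).injective h1
    exact LinearEquiv.toLinearMap_injective (by simpa [m1] using h2)
  have hexij : ∃ i j, M g₀ i j ≠ (1 : Matrix (Fin n) (Fin n) ℚ) i j := by
    by_contra h
    push_neg at h
    exact hMg₀ (Matrix.ext fun i j => h i j)
  obtain ⟨i₀, j₀, hij⟩ := hexij
  set r : ℚ := M g₀ i₀ j₀ - (1 : Matrix (Fin n) (Fin n) ℚ) i₀ j₀ with hr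
  have hr0 : r ≠ 0 := sub_ne_zero.mpr hij
  -- generators
  obtain ⟨S, hS⟩ : ∃ S : Finset G, Subgroup.closure (S : Set G) = ⊤ := Group.FG.out
  -- the finite set of rationals to control
  let Q : Finset ℚ :=
    (S.biUnion fun s =>
      (Finset.univ.image fun ij : Fin n × Fin n => M s ij.1 ij.2) ∪
      (Finset.univ.image fun ij : Fin n × Fin n => M s⁻¹ ij.1 ij.2)) ∪ {r}
  let B : ℕ := Q.sup fun q => q.den ⊔ q.num.natAbs
  obtain ⟨p, hpB, hp⟩ := Nat.exists_infinite_primes (B + 1)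
  haveI : Fact p.Prime := ⟨hp⟩
  have hden : ∀ q ∈ Q, ¬ (p : ℤ) ∣ (q.den : ℤ) := by
    intro q hq hdvd
    have h1 : p ∣ q.den := Int.ofNat_dvd.mp hdvd
    have h2 : p ≤ q.den := Nat.le_of_dvd q.pos h1
    have h3 : q.den ⊔ q.num.natAbs ≤ B := Finset.le_sup (f := fun q => q.den ⊔ q.num.natAbs) hq
    have h4 : q.den ≤ B := le_trans le_sup_left h3
    omega
  -- p-adic matrices
  let N : G →* Matrix (Fin n) (Fin n) ℚ_[p] :=
    ((Rat.castHom ℚ_[p]).mapMatrix).toMonoidHom.comp M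
  have hNapp : ∀ (g : G) (i j : Fin n), N g i j = ((M g i j : ℚ) : ℚ_[p]) := by
    intro g i j; rfl
  -- subgroup of p-integral elements
  have hmulbd : ∀ A C : Matrix (Fin n) (Fin n) ℚ_[p],
      (∀ i j, ‖A i j‖ ≤ 1) → (∀ i j, ‖C i j‖ ≤ 1) → ∀ i j, ‖(A * C) i j‖ ≤ 1 := by
    intro A C hA hC i j
    rw [Matrix.mul_apply]
    refine IsUltrametricDist.norm_sum_le_of_forall_le_of_nonneg zero_le_one fun k _ => ?_
    calc ‖A i k * C k j‖ = ‖A i k‖ * ‖C k j‖ := norm_mul _ _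
    _ ≤ 1 * 1 := mul_le_mul (hA i k) (hC k j) (norm_nonneg _) zero_le_one
    _ = 1 := one_mul 1
  let P : Subgroup G :=
    { carrier := {g : G | (∀ i j, ‖N g i j‖ ≤ 1) ∧ (∀ i j, ‖N g⁻¹ i j‖ ≤ 1)}
      one_mem' := by
        refine ⟨fun i j => ?_, fun i j => ?_⟩ <;>
          · simp only [inv_one, map_one, Matrix.one_apply]
            split <;> simp
      mul_mem' := by
        rintro a c ⟨ha1, ha2⟩ ⟨hc1, hc2⟩
        constructor
        · intro i j
          rw [map_mul]
          exact hmulbd _ _ ha1 hc1 i j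
        · intro i j
          rw [mul_inv_rev, map_mul]
          exact hmulbd _ _ hc2 ha2 i j
      inv_mem' := by
        rintro a ⟨ha1, ha2⟩
        refine ⟨ha2, ?_⟩
        rw [inv_inv]
        exact ha1 }
  have hSP : ∀ s ∈ S, s ∈ P := by
    intro s hs
    constructor
    · intro i j
      rw [hNapp]
      refine aux_norm_rat_le_one _ (hden _ ?_)
      refine Finset.mem_union_left _ (Finset.mem_biUnion.mpr ⟨s, hs, ?_⟩)
      exact Finset.mem_union_left _ (Finset.mem_image.mpr ⟨(i, j), Finset.mem_univ _, rfl⟩)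
    · intro i j
      rw [hNapp]
      refine aux_norm_rat_le_one _ (hden _ ?_)
      refine Finset.mem_union_left _ (Finset.mem_biUnion.mpr ⟨s, hs, ?_⟩)
      exact Finset.mem_union_right _ (Finset.mem_image.mpr ⟨(i, j), Finset.mem_univ _, rfl⟩)
  have hPtop : P = ⊤ := by
    rw [eq_top_iff, ← hS]
    exact (Subgroup.closure_le P).mpr hSP
  have hall : ∀ (g : G) (i j : Fin n), ‖N g i j‖ ≤ 1 := by
    intro g
    have hg : g ∈ P := by rw [hPtop]; trivial
    exact hg.1
  -- integral matrix lift
  let Nt : G → Matrix (Fin n) (Fin n) ℤ_[p] := fun g i j => ⟨N g i j, hall g i j⟩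
  have hNt1 : Nt 1 = 1 := by
    ext i j
    apply Subtype.ext
    show N 1 i j = (((1 : Matrix (Fin n) (Fin n) ℤ_[p]) i j : ℤ_[p]) : ℚ_[p])
    rw [map_one]
    simp [Matrix.one_apply, apply_ite (fun x : ℤ_[p] => (x : ℚ_[p]))]
  have hNtmul : ∀ a c : G, Nt (a * c) = Nt a * Nt c := by
    intro a c
    ext i j
    apply Subtype.ext
    show N (a * c) i j = (((Nt a * Nt c) i j : ℤ_[p]) : ℚ_[p])
    rw [map_mul, Matrix.mul_apply, Matrix.mul_apply]
    rw [show (((∑ k, Nt a i k * Nt c k j : ℤ_[p])) : ℚ_[p])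
        = ∑ k, ((Nt a i k * Nt c k j : ℤ_[p]) : ℚ_[p]) from
      map_sum (PadicInt.Coe.ringHom) _ _]
    simp [Nt, PadicInt.coe_mul]
    rfl
  -- reduction mod p
  let φ : G →* Matrix (Fin n) (Fin n) (ZMod p) :=
    { toFun := fun g => (PadicInt.toZMod.mapMatrix : Matrix (Fin n) (Fin n) ℤ_[p] →+*
        Matrix (Fin n) (Fin n) (ZMod p)) (Nt g)
      map_one' := by rw [hNt1, map_one]
      map_mul' := by intro a c; rw [hNtmul, map_mul] }
  let ψ : G →* (Matrix (Fin n) (Fin n) (ZMod p))ˣ := φ.toHomUnits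
  -- ψ g₀ ≠ 1
  have hψg₀ : ψ g₀ ≠ 1 := by
    intro h
    have hφ : φ g₀ = 1 := by
      have := congrArg Units.val h
      simpa [ψ] using this
    have hent : PadicInt.toZMod (Nt g₀ i₀ j₀)
        = (1 : Matrix (Fin n) (Fin n) (ZMod p)) i₀ j₀ := by
      calc PadicInt.toZMod (Nt g₀ i₀ j₀)
          = (φ g₀) i₀ j₀ := rfl
        _ = (1 : Matrix (Fin n) (Fin n) (ZMod p)) i₀ j₀ := by rw [hφ]
    set x : ℤ_[p] := Nt g₀ i₀ j₀ - (1 : Matrix (Fin n) (Fin n) ℤ_[p]) i₀ j₀ with hx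
    have hxz : PadicInt.toZMod x = 0 := by
      rw [hx, map_sub, hent]
      have : PadicInt.toZMod ((1 : Matrix (Fin n) (Fin n) ℤ_[p]) i₀ j₀)
          = (1 : Matrix (Fin n) (Fin n) (ZMod p)) i₀ j₀ := by
        simp [Matrix.one_apply, apply_ite (PadicInt.toZMod)]
      rw [this, sub_self]
    have hlt : ‖x‖ < 1 := aux_toZMod_eq_zero hxz
    -- but x is the image of r, which has norm 1
    have hxr : ((x : ℤ_[p]) : ℚ_[p]) = ((r : ℚ) : ℚ_[p]) := by
      rw [hx, hr]
      push_cast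
      rw [show ((Nt g₀ i₀ j₀ : ℤ_[p]) : ℚ_[p]) = N g₀ i₀ j₀ from rfl, hNapp]
      congr 1
      simp [Matrix.one_apply, apply_ite (fun y : ℤ_[p] => (y : ℚ_[p])),
        apply_ite (fun q : ℚ => (q : ℚ_[p]))]
    have hrQ : r ∈ Q := Finset.mem_union_right _ (Finset.mem_singleton_self r)
    have hnum : ¬ (p : ℤ) ∣ r.num := by
      intro hdvd
      have h1 : (p : ℤ) ∣ (r.num.natAbs : ℤ) := by rwa [Int.dvd_natAbs]
      have h2 : p ∣ r.num.natAbs := Int.ofNat_dvd.mp h1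
      have h3 : r.num.natAbs ≠ 0 := by
        simp [Int.natAbs_eq_zero, Rat.num_eq_zero, hr0]
      have h4 : p ≤ r.num.natAbs := Nat.le_of_dvd (Nat.pos_of_ne_zero h3) h2
      have h5 : r.den ⊔ r.num.natAbs ≤ B := Finset.le_sup (f := fun q => q.den ⊔ q.num.natAbs) hrQ
      have h6 : r.num.natAbs ≤ B := le_trans le_sup_right h5
      omega
    have hone : ‖((r : ℚ) : ℚ_[p])‖ = 1 := aux_norm_rat_eq_one r (hden r hrQ) hnum
    rw [PadicInt.norm_def, hxr, hone] at hlt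
    exact lt_irrefl _ hlt
  -- simplicity: kernel is trivial, so G embeds into a finite group
  have hker : ψ.ker = ⊥ := by
    rcases Subgroup.Normal.eq_bot_or_eq_top (MonoidHom.normal_ker ψ) with h | h
    · exact h
    · exfalso
      apply hψg₀
      have : g₀ ∈ ψ.ker := by rw [h]; trivial
      exact this
  have hinj : Function.Injective ψ := (MonoidHom.ker_eq_bot_iff ψ).mp hker
  haveI : NeZero p := ⟨hp.ne_zero⟩
  haveI : Finite G := Finite.of_injective (⇑ψ) hinj
  exact not_finite G
end
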